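/- Let $r \geq 2$ and $A > 0$ be real numbers and $x \geq 1$. Then the number of positive integers $n \leq x$ whose $r$-smooth part $\prod_{p^\alpha \| n,\ p \leq r} p^\alpha$ exceeds $r^A$ is at most $C \cdot x/A$ for some absolute constant $C > 0$. -/

import Mathlib

open scoped Classical
open Finset

-- Sum of p-adic valuations over an interval equals valuation of factorial
lemma auxA (N p : ℕ) :
    (Nat.factorial N).factorization p = ∑ n ∈ Finset.Icc 1 N, n.factorization p := by
  rw [← Finset.prod_Ico_id_eq_factorial, Finset.Ico_add_one_right_eq_Icc,
    Nat.factorization_prod (fun x hx => by simp only [Finset.mem_Icc] at hx; omega)]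
  exact Finset.sum_apply' p

lemma auxB {p : ℕ} (hp : p.Prime) (N : ℕ) :
    N / p ≤ (Nat.factorial N).factorization p := by
  rw [auxA]
  have h1 : N / p = ((Finset.Ioc 0 N).filter (fun x => p ∣ x)).card :=
    (Nat.Ioc_filter_dvd_card_eq_div N p).symm
  rw [h1, Finset.card_eq_sum_ones]
  have hsub : (Finset.Ioc 0 N).filter (fun x => p ∣ x) ⊆ Finset.Icc 1 N := by
    intro x hx
    simp only [Finset.mem_filter, Finset.mem_Ioc] at hx
    simp only [Finset.mem_Icc]; omega
  calc ∑ _x ∈ (Finset.Ioc 0 N).filter (fun x => p ∣ x), 1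
      ≤ ∑ x ∈ (Finset.Ioc 0 N).filter (fun x => p ∣ x), x.factorization p := by
        refine Finset.sum_le_sum (fun x hx => ?_)
        simp only [Finset.mem_filter, Finset.mem_Ioc] at hx
        exact hp.factorization_pos_of_dvd (by omega) hx.2
    _ ≤ ∑ n ∈ Finset.Icc 1 N, n.factorization p :=
        Finset.sum_le_sum_of_subset hsub

lemma auxC {p : ℕ} (hp : p.Prime) (N : ℕ) :
    (p - 1) * (Nat.factorial N).factorization p ≤ N := by
  haveI : Fact p.Prime := ⟨hp⟩
  rw [Nat.factorization_def _ hp, sub_one_mul_padicValNat_factorial]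
  exact Nat.sub_le _ _

lemma auxD (M : ℕ) :
    ∑ p ∈ (Finset.range (M + 1)).filter Nat.Prime, Real.log p ≤ M * Real.log 4 := by
  have hpos : (0 : ℝ) < (primorial M : ℝ) := by
    have : primorial M ≠ 0 := by
      rw [primorial]
      exact Finset.prod_ne_zero_iff.mpr fun p hp => (Finset.mem_filter.mp hp).2.pos.ne'
    exact_mod_cast Nat.pos_of_ne_zero this
  have h1 : ((primorial M : ℕ) : ℝ) ≤ (4 : ℝ) ^ M := by
    exact_mod_cast primorial_le_4_pow M
  have h2 := Real.log_le_log hpos h1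
  rw [Real.log_pow] at h2
  rw [primorial, Nat.cast_prod, Real.log_prod] at h2
  · exact h2
  · intro p hp
    simp only [Finset.mem_filter] at hp
    exact_mod_cast hp.2.pos.ne'

lemma auxE (N : ℕ) : Real.log (Nat.factorial N) ≤ N * Real.log N := by
  rcases Nat.eq_zero_or_pos N with rfl | hN
  · simp
  have h1 : ((Nat.factorial N : ℕ) : ℝ) ≤ (N : ℝ) ^ N := by
    exact_mod_cast Nat.factorial_le_pow N
  have := Real.log_le_log (by exact_mod_cast N.factorial_pos) h1
  rwa [Real.log_pow] at this

lemma auxF {M : ℕ} (hM : 1 ≤ M) :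
    ∑ p ∈ (Finset.range (M + 1)).filter Nat.Prime, Real.log p / p
      ≤ Real.log M + Real.log 4 := by
  have hM0 : (0 : ℝ) < M := by exact_mod_cast hM
  rw [← mul_le_mul_iff_right₀ hM0, Finset.mul_sum]
  have key : ∀ p ∈ (Finset.range (M + 1)).filter Nat.Prime,
      (M : ℝ) * (Real.log p / p) ≤ ((M / p : ℕ) : ℝ) * Real.log p + Real.log p := by
    intro p hp
    simp only [Finset.mem_filter, Finset.mem_range] at hp
    have hp2 := hp.2.two_le
    have hppos : (0 : ℝ) < p := by exact_mod_cast hp.2.pos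
    have hlog : 0 ≤ Real.log p := Real.log_nonneg (by exact_mod_cast hp.2.one_lt.le)
    have hdiv : (M : ℝ) / p ≤ ((M / p : ℕ) : ℝ) + 1 := by
      rw [div_le_iff₀ hppos]
      have : M < (M / p + 1) * p := by
        rw [← Nat.div_lt_iff_lt_mul hp.2.pos]; omega
      exact_mod_cast this.le
    calc (M : ℝ) * (Real.log p / p) = ((M : ℝ) / p) * Real.log p := by ring
      _ ≤ (((M / p : ℕ) : ℝ) + 1) * Real.log p := by
          exact mul_le_mul_of_nonneg_right hdiv hlog
      _ = ((M / p : ℕ) : ℝ) * Real.log p + Real.log p := by ring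
  have step1 := Finset.sum_le_sum key
  rw [Finset.sum_add_distrib] at step1
  -- bound the floor sum by log M!
  have hfactpos : (0 : ℝ) < ((Nat.factorial M : ℕ) : ℝ) := by
    exact_mod_cast M.factorial_pos
  have hlogfact : Real.log (Nat.factorial M)
      = ∑ q ∈ (Nat.factorial M).primeFactors,
          ((Nat.factorial M).factorization q : ℝ) * Real.log q := by
    conv_lhs => rw [← Nat.factorization_prod_pow_eq_self M.factorial_pos.ne']
    rw [Nat.prod_factorization_eq_prod_primeFactors, Nat.cast_prod, Real.log_prod]
    · refine Finset.sum_congr rfl (fun q hq => ?_)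
      rw [Nat.cast_pow, Real.log_pow]
    · intro q hq
      have hq' := Nat.prime_of_mem_primeFactors hq
      exact_mod_cast pow_ne_zero _ hq'.pos.ne'
  have hsub : (Finset.range (M + 1)).filter Nat.Prime ⊆ (Nat.factorial M).primeFactors := by
    intro p hp
    simp only [Finset.mem_filter, Finset.mem_range] at hp
    refine Nat.mem_primeFactors.mpr ⟨hp.2, Nat.dvd_factorial hp.2.pos (by omega),
      M.factorial_pos.ne'⟩
  have step2 : ∑ p ∈ (Finset.range (M + 1)).filter Nat.Prime,
      ((M / p : ℕ) : ℝ) * Real.log p ≤ Real.log (Nat.factorial M) := by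
    rw [hlogfact]
    refine le_trans (Finset.sum_le_sum ?_) (Finset.sum_le_sum_of_subset_of_nonneg hsub ?_)
    · intro p hp
      simp only [Finset.mem_filter, Finset.mem_range] at hp
      have hlog : 0 ≤ Real.log p := Real.log_nonneg (by exact_mod_cast hp.2.one_lt.le)
      have := auxB hp.2 M
      exact mul_le_mul_of_nonneg_right (by exact_mod_cast this) hlog
    · intro q hq _
      have hq' := Nat.prime_of_mem_primeFactors hq
      have hlog : 0 ≤ Real.log q := Real.log_nonneg (by exact_mod_cast hq'.one_lt.le)
      positivity
  have step3 := auxD M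
  have step4 := auxE M
  calc ∑ p ∈ (Finset.range (M + 1)).filter Nat.Prime, (M : ℝ) * (Real.log p / p)
      ≤ Real.log (Nat.factorial M) + M * Real.log 4 := by
        refine le_trans step1 ?_
        exact add_le_add step2 step3
    _ ≤ M * Real.log M + M * Real.log 4 := by linarith
    _ = M * (Real.log M + Real.log 4) := by ring

noncomputable def ff (r : ℝ) (n : ℕ) : ℝ :=
  ((∏ p ∈ n.primeFactors.filter (fun p : ℕ => (p : ℝ) ≤ r),
      p ^ (n.factorization p) : ℕ) : ℝ)

theorem stmt2 :
    ∃ C : ℝ, 0 < C ∧ ∀ (r A x : ℝ), 2 ≤ r → 0 < A → 1 ≤ x →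
      (((Finset.Icc 1 ⌊x⌋₊).filter (fun n =>
          ((∏ p ∈ n.primeFactors.filter (fun p => (p : ℝ) ≤ r),
              p ^ (n.factorization p) : ℕ) : ℝ) > r ^ A)).card : ℝ)
        ≤ C * x / A := by
  refine ⟨6, by norm_num, fun r A x hr hA hx => ?_⟩
  have hr0 : (0:ℝ) < r := by linarith
  have hx0 : (0:ℝ) ≤ x := by linarith
  set N := ⌊x⌋₊ with hN
  set M := ⌊r⌋₊ with hM
  have hM2 : 2 ≤ M := Nat.le_floor (by exact_mod_cast hr)
  have hMr : (M:ℝ) ≤ r := Nat.floor_le hr0.le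
  have hNx : (N:ℝ) ≤ x := Nat.floor_le hx0
  have hlogr : 0 < Real.log r := Real.log_pos (by linarith)
  set P := (Finset.range (M+1)).filter Nat.Prime with hP
  show ((((Finset.Icc 1 N).filter (fun n => ff r n > r ^ A)).card : ℕ) : ℝ) ≤ 6 * x / A
  set S := (Finset.Icc 1 N).filter (fun n => ff r n > r ^ A) with hS
  have hsm : ∀ n ∈ Finset.Icc 1 N,
      Real.log (ff r n) = ∑ p ∈ P, (n.factorization p : ℝ) * Real.log p := by
    intro n hn
    rw [Finset.mem_Icc] at hn
    have hn0 : n ≠ 0 := by omega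
    unfold ff
    rw [Nat.cast_prod, Real.log_prod]
    swap
    · intro p hp
      have hp' := Nat.prime_of_mem_primeFactors (Finset.mem_of_mem_filter _ hp)
      exact_mod_cast pow_ne_zero _ hp'.pos.ne'
    have hsub : n.primeFactors.filter (fun p : ℕ => (p : ℝ) ≤ r) ⊆ P := by
      intro p hp
      rw [Finset.mem_filter] at hp
      have hp' := Nat.prime_of_mem_primeFactors hp.1
      have hpM : p ≤ M := Nat.le_floor hp.2
      rw [hP, Finset.mem_filter, Finset.mem_range]
      exact ⟨by omega, hp'⟩
    rw [← Finset.sum_subset hsub]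
    · exact Finset.sum_congr rfl (fun p hp => by rw [Nat.cast_pow, Real.log_pow])
    · intro p hp hnp
      rw [hP, Finset.mem_filter, Finset.mem_range] at hp
      have hpr : (p:ℝ) ≤ r := le_trans (by exact_mod_cast Nat.lt_succ_iff.mp hp.1) hMr
      have hmem : p ∉ n.primeFactors := fun h => hnp (Finset.mem_filter.mpr ⟨h, hpr⟩)
      have hnd : ¬ p ∣ n := fun hd => hmem (Nat.mem_primeFactors.mpr ⟨hp.2, hd, hn0⟩)
      rw [Nat.factorization_eq_zero_of_not_dvd hnd]
      simp
  have hstep1 : (S.card : ℝ) * (A * Real.log r) ≤ ∑ n ∈ S, Real.log (ff r n) := by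
    have key : ∀ n ∈ S, A * Real.log r ≤ Real.log (ff r n) := by
      intro n hn
      rw [hS, Finset.mem_filter] at hn
      have h1 := Real.log_le_log (Real.rpow_pos_of_pos hr0 A) hn.2.le
      rwa [Real.log_rpow hr0] at h1
    have h := Finset.card_nsmul_le_sum S _ _ key
    simpa [nsmul_eq_mul] using h
  have hstep2 : ∑ n ∈ S, Real.log (ff r n) ≤ ∑ n ∈ Finset.Icc 1 N, Real.log (ff r n) := by
    refine Finset.sum_le_sum_of_subset_of_nonneg (Finset.filter_subset _ _) ?_
    intro n hn _
    rw [hsm n hn]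
    refine Finset.sum_nonneg fun p hp => ?_
    have hp' : p.Prime := (Finset.mem_filter.mp hp).2
    have hlp : (0:ℝ) ≤ Real.log p := Real.log_nonneg (by exact_mod_cast hp'.one_lt.le)
    positivity
  have hstep3 : ∑ n ∈ Finset.Icc 1 N, Real.log (ff r n)
      = ∑ p ∈ P, ((Nat.factorial N).factorization p : ℝ) * Real.log p := by
    rw [Finset.sum_congr rfl hsm, Finset.sum_comm]
    refine Finset.sum_congr rfl fun p hp => ?_
    rw [auxA, Nat.cast_sum, Finset.sum_mul]
  have hstep4 : ∑ p ∈ P, ((Nat.factorial N).factorization p : ℝ) * Real.log p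
      ≤ ∑ p ∈ P, 2 * (N:ℝ) * (Real.log p / p) := by
    refine Finset.sum_le_sum fun p hp => ?_
    rw [hP, Finset.mem_filter] at hp
    have hp' := hp.2
    have hp2 : (2:ℝ) ≤ p := by exact_mod_cast hp'.two_le
    have hppos : (0:ℝ) < p := by linarith
    have hlp : (0:ℝ) ≤ Real.log p := Real.log_nonneg (by linarith)
    have hC : ((p - 1 : ℕ) : ℝ) * ((Nat.factorial N).factorization p : ℝ) ≤ N := by
      exact_mod_cast auxC hp' N
    rw [Nat.cast_sub hp'.one_le] at hC
    have hval : ((Nat.factorial N).factorization p : ℝ) ≤ 2 * N / p := by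
      rw [le_div_iff₀ hppos]
      have h0 : (0:ℝ) ≤ ((Nat.factorial N).factorization p : ℝ) := Nat.cast_nonneg _
      push_cast at hC ⊢
      nlinarith
    calc ((Nat.factorial N).factorization p : ℝ) * Real.log p
        ≤ (2 * N / p) * Real.log p := mul_le_mul_of_nonneg_right hval hlp
      _ = 2 * (N:ℝ) * (Real.log p / p) := by ring
  have hstep5 : ∑ p ∈ P, 2 * (N:ℝ) * (Real.log p / p)
      ≤ 2 * (N:ℝ) * (Real.log M + Real.log 4) := by
    rw [← Finset.mul_sum]
    have hN0 : (0:ℝ) ≤ 2 * (N:ℝ) := by positivity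
    exact mul_le_mul_of_nonneg_left (auxF (by omega)) hN0
  have hlogM : Real.log M ≤ Real.log r :=
    Real.log_le_log (by exact_mod_cast (by omega : 0 < M)) hMr
  have hlog4 : Real.log 4 ≤ 2 * Real.log r := by
    have h4 : (4:ℝ) = 2 ^ 2 := by norm_num
    have h2 := Real.log_le_log (by norm_num : (0:ℝ) < 2) hr
    rw [h4, Real.log_pow]
    push_cast
    linarith
  have hN1 : (0:ℝ) ≤ (N:ℝ) := Nat.cast_nonneg _
  have h6 : 2 * (N:ℝ) * (Real.log M + Real.log 4) ≤ 6 * x * Real.log r := by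
    have e1 : (N:ℝ) * Real.log M ≤ (N:ℝ) * Real.log r :=
      mul_le_mul_of_nonneg_left hlogM hN1
    have e2 : (N:ℝ) * Real.log 4 ≤ (N:ℝ) * (2 * Real.log r) :=
      mul_le_mul_of_nonneg_left hlog4 hN1
    have e3 : (N:ℝ) * Real.log r ≤ x * Real.log r :=
      mul_le_mul_of_nonneg_right hNx hlogr.le
    nlinarith
  have hfinal : (S.card : ℝ) * (A * Real.log r) ≤ 6 * x * Real.log r := by
    calc (S.card : ℝ) * (A * Real.log r) ≤ ∑ n ∈ S, Real.log (ff r n) := hstep1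
      _ ≤ ∑ n ∈ Finset.Icc 1 N, Real.log (ff r n) := hstep2
      _ = ∑ p ∈ P, ((Nat.factorial N).factorization p : ℝ) * Real.log p := hstep3
      _ ≤ ∑ p ∈ P, 2 * (N:ℝ) * (Real.log p / p) := hstep4
      _ ≤ 2 * (N:ℝ) * (Real.log M + Real.log 4) := hstep5
      _ ≤ 6 * x * Real.log r := h6
  rw [le_div_iff₀ hA]
  refine le_of_mul_le_mul_right ?_ hlogr
  calc (S.card : ℝ) * A * Real.log r = (S.card : ℝ) * (A * Real.log r) := by ring
    _ ≤ 6 * x * Real.log r := hfinal
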